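/- Let k, l ≥ 0 and let λ = (1^k,3^l) be the partition of k+3l with k parts equal to 1 and l parts equal to 3. For every partition μ of k+3l, K^{-1}_{(1^k,3^l),μ} = 0 unless μ = (1^a,2^b,3^c) (all parts of μ are at most 3) with c ≤ l; moreover, in that case K^{-1}_{(1^k,3^l),(1^a,2^b,3^c)} = K^{-1}_{(1^k,3^{l−c}),(1^a,2^b)}, an inverse Kostka number of partitions of k+3(l−c). -/

import Mathlib

open Finset MvPolynomial

/-- The `p`-th entry of an `n`-tuple, with default value `0` out of range. -/
def nth (n : ℕ) (f : Fin n → ℕ) (p : ℕ) : ℕ := if h : p < n then f ⟨p, h⟩ else 0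

/-- `a_α = det (x_j ^ α_i)`. -/
noncomputable def aDet (n : ℕ) (α : Fin n → ℕ) : MvPolynomial (Fin n) ℤ :=
  (Matrix.of fun i j : Fin n => (X j : MvPolynomial (Fin n) ℤ) ^ α i).det

/-- `x ^ β = ∏ x_i ^ β_i`. -/
noncomputable def xpow (n : ℕ) (β : Fin n → ℕ) : MvPolynomial (Fin n) ℤ :=
  ∏ i, X i ^ β i

/-- The monomial symmetric polynomial `m_lam(n) = Σ_{w ∈ Sₙ^lam} x^{w(lam)}`:
the sum of `x^β` over all distinct rearrangements `β` of `lam`. -/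
noncomputable def msym (n : ℕ) (lam : Fin n → ℕ) : MvPolynomial (Fin n) ℤ :=
  ∑ β ∈ Finset.univ.image (fun σ : Equiv.Perm (Fin n) => lam ∘ σ), xpow n β

/-- `δ(n) = (0, 1, …, n-1)`. -/
def deltaN (n : ℕ) : Fin n → ℕ := fun i => (i : ℕ)

/-- `P(m∣n)`: partitions of `m` as nondecreasing `n`-tuples (zeros at the beginning). -/
def Par (n m : ℕ) : Finset (Fin n → ℕ) :=
  (Fintype.piFinset fun _ : Fin n => Finset.range (m + 1)).filter
    fun μ => (∀ i j : Fin n, i ≤ j → μ i ≤ μ j) ∧ ∑ i, μ i = m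

/-- `K` is the inverse Kostka matrix in `n` variables: for every weight `m` and
every `lam ∈ P(m∣n)`, `m_lam(n) · a_{δ(n)} = Σ_{μ ∈ P(m∣n)} K lam μ · a_{μ+δ(n)}`
(equivalently `m_lam(n) = Σ_μ K lam μ · s_μ(n)`). -/
def IsInvKostka (n : ℕ) (K : (Fin n → ℕ) → (Fin n → ℕ) → ℤ) : Prop :=
  ∀ m : ℕ, ∀ lam ∈ Par n m,
    msym n lam * aDet n (deltaN n) =
      ∑ μ ∈ Par n m, C (K lam μ) * aDet n (fun i => μ i + (i : ℕ))

/-- The partition `(1^a, 2^b, 3^c)` as a nondecreasing `n`-tuple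
(requires `a + b + c ≤ n`). -/
def tuple3 (n a b c : ℕ) : Fin n → ℕ :=
  fun i => if (i : ℕ) < n - a - b - c then 0
    else if (i : ℕ) < n - b - c then 1
    else if (i : ℕ) < n - c then 2 else 3

noncomputable def dd (n : ℕ) (f : Fin n → ℕ) : Fin n →₀ ℕ := Finsupp.equivFunOnFinite.symm f

lemma dd_apply (n : ℕ) (f : Fin n → ℕ) (i : Fin n) : dd n f i = f i := rfl

lemma dd_inj {n : ℕ} {f g : Fin n → ℕ} (h : dd n f = dd n g) : f = g := by
  simpa [dd] using h

lemma xpow_eq_monomial (n : ℕ) (β : Fin n → ℕ) : xpow n β = monomial (dd n β) 1 := by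
  rw [← prod_X_pow_eq_monomial, xpow]
  refine (Finset.prod_subset (Finset.subset_univ _) ?_).symm
  intro x _ hx
  simp only [Finsupp.notMem_support_iff, dd_apply] at hx
  simp [hx]

lemma coeff_xpow (n : ℕ) (d : Fin n →₀ ℕ) (β : Fin n → ℕ) :
    coeff d (xpow n β) = if dd n β = d then 1 else 0 := by
  rw [xpow_eq_monomial, coeff_monomial]

lemma aDet_eq (n : ℕ) (α : Fin n → ℕ) :
    aDet n α = ∑ σ : Equiv.Perm (Fin n), (C ((Equiv.Perm.sign σ : ℤ)) : MvPolynomial (Fin n) ℤ) * xpow n (fun i => α (σ i)) := by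
  rw [aDet, Matrix.det_apply']
  refine Finset.sum_congr rfl fun σ _ => ?_
  rw [xpow]
  rw [show (C ((Equiv.Perm.sign σ : ℤ)) : MvPolynomial (Fin n) ℤ) = ((Equiv.Perm.sign σ : ℤ) : MvPolynomial (Fin n) ℤ) from eq_intCast (C : ℤ →+* MvPolynomial (Fin n) ℤ) _]
  rfl

lemma coeff_aDet (n : ℕ) (α : Fin n → ℕ) (d : Fin n →₀ ℕ) :
    coeff d (aDet n α) = ∑ σ : Equiv.Perm (Fin n),
      (Equiv.Perm.sign σ : ℤ) * (if dd n (fun i => α (σ i)) = d then 1 else 0) := by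
  rw [aDet_eq, coeff_sum]
  exact Finset.sum_congr rfl fun σ _ => by rw [coeff_C_mul, coeff_xpow]

lemma xpow_mul (n : ℕ) (β γ : Fin n → ℕ) :
    xpow n β * xpow n γ = xpow n (fun i => β i + γ i) := by
  rw [xpow, xpow, xpow, ← Finset.prod_mul_distrib]
  exact Finset.prod_congr rfl fun i _ => (pow_add _ _ _).symm

lemma dd_eq_iff {n : ℕ} {f g : Fin n → ℕ} : dd n f = dd n g ↔ ∀ i, f i = g i := by
  constructor
  · intro h i
    rw [← dd_apply n f i, h, dd_apply]
  · intro h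
    have : f = g := funext h
    rw [this]

def deltaN' (n : ℕ) : Fin n → ℕ := fun i => (i : ℕ)

lemma coeff_msym_mul_aDet (n : ℕ) (lam μ : Fin n → ℕ) :
    coeff (dd n (fun i => μ i + (i : ℕ))) (msym n lam * aDet n (deltaN' n)) =
    ∑ σ : Equiv.Perm (Fin n), (Equiv.Perm.sign σ : ℤ) *
      (if ∃ τ : Equiv.Perm (Fin n), ∀ i, μ i + (i : ℕ) = lam (τ i) + (σ i : ℕ) then 1 else 0) := by
  rw [msym, aDet_eq, Finset.sum_mul_sum, coeff_sum]
  have step : ∀ β ∈ Finset.univ.image (fun σ : Equiv.Perm (Fin n) => lam ∘ σ),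
      coeff (dd n (fun i => μ i + (i : ℕ)))
        (∑ σ : Equiv.Perm (Fin n), xpow n β * (C ((Equiv.Perm.sign σ : ℤ)) * xpow n (fun i => deltaN' n (σ i)))) =
      ∑ σ : Equiv.Perm (Fin n), (Equiv.Perm.sign σ : ℤ) *
        (if ∀ i, μ i + (i : ℕ) = β i + (σ i : ℕ) then 1 else 0) := by
    intro β _
    rw [coeff_sum]
    refine Finset.sum_congr rfl fun σ _ => ?_
    rw [mul_left_comm, coeff_C_mul, mul_comm (xpow n _), xpow_mul, coeff_xpow]
    have hiff : ((dd n fun i => deltaN' n (σ i) + β i) = dd n fun i => μ i + (i:ℕ)) ↔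
        (∀ i, μ i + (i : ℕ) = β i + (σ i : ℕ)) := by
      rw [dd_eq_iff]
      simp only [deltaN']
      constructor
      · intro h i; have := h i; omega
      · intro h i; have := h i; omega
    by_cases h1 : ∀ i, μ i + (i:ℕ) = β i + (σ i : ℕ)
    · rw [if_pos h1, if_pos (hiff.2 h1)]
    · rw [if_neg h1, if_neg (fun hc => h1 (hiff.1 hc))]
  rw [Finset.sum_congr rfl step, Finset.sum_comm]
  refine Finset.sum_congr rfl fun σ _ => ?_
  rw [← Finset.mul_sum]
  congr 1
  by_cases h : ∃ τ : Equiv.Perm (Fin n), ∀ i, μ i + (i : ℕ) = lam (τ i) + (σ i : ℕ)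
  · rw [if_pos h]
    obtain ⟨τ, hτ⟩ := h
    have huniq : ∀ β ∈ Finset.univ.image (fun σ : Equiv.Perm (Fin n) => lam ∘ σ),
        (if ∀ i, μ i + (i : ℕ) = β i + (σ i : ℕ) then (1:ℤ) else 0) =
        (if β = lam ∘ τ then (1:ℤ) else 0) := by
      intro β _
      congr 1
      apply propext
      constructor
      · intro hc
        funext i
        have := hc i
        have h2 := hτ i
        simp only [Function.comp_apply]
        omega
      · intro hc i
        rw [hc]; exact hτ i
    rw [Finset.sum_congr rfl huniq, Finset.sum_ite_eq' _ (lam ∘ τ)]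
    rw [if_pos (Finset.mem_image.2 ⟨τ, Finset.mem_univ τ, rfl⟩)]
  · rw [if_neg h]
    apply Finset.sum_eq_zero
    intro β hβ
    rw [if_neg]
    intro hc
    obtain ⟨τ, _, rfl⟩ := Finset.mem_image.1 hβ
    exact h ⟨τ, fun i => hc i⟩

lemma perm_eq_one_of_strictMono {n : ℕ} (σ : Equiv.Perm (Fin n)) (h : StrictMono ⇑σ) :
    σ = 1 := by
  have : ⇑σ = id := by
    apply (StrictMono.range_inj h strictMono_id).1
    rw [Set.range_id]
    exact Set.range_eq_univ.mpr σ.surjective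
  ext i
  rw [show σ i = id i from congrFun this i]
  rfl

lemma coeff_aDet_delta (n : ℕ) (μ ν : Fin n → ℕ)
    (hμ : ∀ i j : Fin n, i ≤ j → μ i ≤ μ j) (hν : ∀ i j : Fin n, i ≤ j → ν i ≤ ν j) :
    coeff (dd n fun i => μ i + (i:ℕ)) (aDet n (fun i => ν i + (i:ℕ)))
      = if ν = μ then 1 else 0 := by
  rw [coeff_aDet]
  have key : ∀ σ : Equiv.Perm (Fin n),
      (dd n (fun i => ν (σ i) + (σ i : ℕ)) = dd n (fun i => μ i + (i:ℕ))) → σ = 1 ∧ ν = μ := by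
    intro σ hc
    rw [dd_eq_iff] at hc
    have hfs : StrictMono (fun i : Fin n => ν i + (i : ℕ)) := by
      intro i j hij
      have := hν i j (le_of_lt hij)
      have : (i:ℕ) < (j:ℕ) := hij
      simp only []
      omega
    have hσ : StrictMono ⇑σ := by
      intro i j hij
      have h1 : μ i + (i:ℕ) < μ j + (j:ℕ) := by
        have := hμ i j (le_of_lt hij)
        have : (i:ℕ) < (j:ℕ) := hij
        omega
      have h2 : ν (σ i) + ((σ i):ℕ) < ν (σ j) + ((σ j):ℕ) := by
        rw [hc i, hc j]; exact h1
      by_contra hcon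
      push_neg at hcon
      rcases lt_or_eq_of_le hcon with h3 | h3
      · have h4 : ν (σ j) + ((σ j):ℕ) < ν (σ i) + ((σ i):ℕ) := hfs h3
        omega
      · have : σ j = σ i := Fin.ext (by exact_mod_cast congrArg Fin.val h3)
        have : j = i := σ.injective this
        exact absurd hij (by omega)
    have hσ1 : σ = 1 := perm_eq_one_of_strictMono σ hσ
    refine ⟨hσ1, funext fun i => ?_⟩
    have := hc i
    rw [hσ1] at this
    simp only [Equiv.Perm.coe_one, id_eq] at this
    omega
  by_cases hcase : ν = μ
  · subst hcase
    rw [if_pos rfl]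
    rw [Finset.sum_eq_single (1 : Equiv.Perm (Fin n))]
    · rw [if_pos (by rw [dd_eq_iff]; intro i; simp)]
      simp
    · intro σ _ hσ
      rw [if_neg (fun hc => hσ (key σ hc).1)]
      ring
    · intro h; exact absurd (Finset.mem_univ _) h
  · rw [if_neg hcase]
    apply Finset.sum_eq_zero
    intro σ _
    rw [if_neg (fun hc => hcase (key σ hc).2)]
    ring



lemma par_monotone {n m : ℕ} {μ : Fin n → ℕ} (h : μ ∈ Par n m) :
    ∀ i j : Fin n, i ≤ j → μ i ≤ μ j := ((Finset.mem_filter.1 h).2).1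

lemma K_eq_coeff (n : ℕ) (K : (Fin n → ℕ) → (Fin n → ℕ) → ℤ) (hK : IsInvKostka n K)
    (m : ℕ) (lam μ : Fin n → ℕ) (hlam : lam ∈ Par n m) (hμ : μ ∈ Par n m) :
    K lam μ = ∑ σ : Equiv.Perm (Fin n), (Equiv.Perm.sign σ : ℤ) *
      (if ∃ τ : Equiv.Perm (Fin n), ∀ i, μ i + (i : ℕ) = lam (τ i) + (σ i : ℕ) then 1 else 0) := by
  have h1 := hK m lam hlam
  have h2 := congrArg (coeff (dd n (fun i => μ i + (i:ℕ)))) h1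
  rw [show (deltaN n) = deltaN' n from rfl, coeff_msym_mul_aDet, coeff_sum] at h2
  rw [h2]
  have h3 : ∀ ν ∈ Par n m,
      coeff (dd n fun i => μ i + (i:ℕ)) (C (K lam ν) * aDet n fun i => ν i + (i:ℕ))
        = if ν = μ then K lam ν else 0 := by
    intro ν hν
    rw [coeff_C_mul, coeff_aDet_delta n μ ν (par_monotone hμ) (par_monotone hν)]
    by_cases h : ν = μ
    · rw [if_pos h, if_pos h, mul_one]
    · rw [if_neg h, if_neg h, mul_zero]
  rw [Finset.sum_congr rfl h3, Finset.sum_ite_eq' (Par n m) μ, if_pos hμ]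



def fib (n : ℕ) (f : Fin n → ℕ) (v : ℕ) : ℕ :=
  (Finset.univ.filter fun i => f i = v).card

lemma card_val_Ico (n lo hi : ℕ) (h : hi ≤ n) :
    (Finset.univ.filter fun i : Fin n => lo ≤ (i:ℕ) ∧ (i:ℕ) < hi).card = hi - lo := by
  rw [← Nat.card_Ico lo hi]
  apply Finset.card_bij (fun (i : Fin n) (_ : i ∈ Finset.univ.filter fun i : Fin n => lo ≤ (i:ℕ) ∧ (i:ℕ) < hi) => (i:ℕ))
  · intro i hi
    simp only [Finset.mem_filter, Finset.mem_univ, true_and] at hi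
    exact Finset.mem_Ico.2 hi
  · intro i _ j _ hh; exact Fin.ext hh
  · intro x hx
    rw [Finset.mem_Ico] at hx
    exact ⟨⟨x, by omega⟩, by simp only [Finset.mem_filter, Finset.mem_univ, true_and]; exact hx, rfl⟩

lemma fib_interval (n : ℕ) (f : Fin n → ℕ) (v lo hi : ℕ) (h : hi ≤ n)
    (hiff : ∀ i : Fin n, f i = v ↔ (lo ≤ (i:ℕ) ∧ (i:ℕ) < hi)) :
    fib n f v = hi - lo := by
  rw [fib, Finset.filter_congr (fun x _ => hiff x), card_val_Ico n lo hi h]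

lemma tuple3_le (n a b c : ℕ) (i : Fin n) : tuple3 n a b c i ≤ 3 := by
  unfold tuple3; split_ifs <;> omega

lemma fib_tuple3_0 (n a b c : ℕ) (h : a + b + c ≤ n) :
    fib n (tuple3 n a b c) 0 = n - a - b - c := by
  have e := fib_interval n (tuple3 n a b c) 0 0 (n-a-b-c) (by omega)
    (fun i => by have := i.isLt; unfold tuple3; constructor
                 · intro hh; split_ifs at hh <;> omega
                 · intro hh; split_ifs <;> omega)
  omega

lemma fib_tuple3_1 (n a b c : ℕ) (h : a + b + c ≤ n) :
    fib n (tuple3 n a b c) 1 = a := by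
  have e := fib_interval n (tuple3 n a b c) 1 (n-a-b-c) (n-b-c) (by omega)
    (fun i => by have := i.isLt; unfold tuple3; constructor
                 · intro hh; split_ifs at hh <;> omega
                 · intro hh; split_ifs <;> omega)
  omega

lemma fib_tuple3_2 (n a b c : ℕ) (h : a + b + c ≤ n) :
    fib n (tuple3 n a b c) 2 = b := by
  have e := fib_interval n (tuple3 n a b c) 2 (n-b-c) (n-c) (by omega)
    (fun i => by have := i.isLt; unfold tuple3; constructor
                 · intro hh; split_ifs at hh <;> omega
                 · intro hh; split_ifs <;> omega)
  omega

lemma fib_tuple3_3 (n a b c : ℕ) (h : a + b + c ≤ n) :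
    fib n (tuple3 n a b c) 3 = c := by
  have e := fib_interval n (tuple3 n a b c) 3 (n-c) n (le_refl n)
    (fun i => by have := i.isLt; unfold tuple3; constructor
                 · intro hh; split_ifs at hh <;> omega
                 · intro hh; split_ifs <;> omega)
  omega

lemma fib_tuple3_big (n a b c v : ℕ) (hv : 4 ≤ v) :
    fib n (tuple3 n a b c) v = 0 := by
  rw [fib, Finset.card_eq_zero]
  apply Finset.filter_false_of_mem
  intro i _
  have := tuple3_le n a b c i
  omega

lemma fib_comp_perm (n : ℕ) (f : Fin n → ℕ) (τ : Equiv.Perm (Fin n)) (v : ℕ) :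
    fib n (fun i => f (τ i)) v = fib n f v := by
  apply Finset.card_bij (fun (i : Fin n) (_ : i ∈ Finset.univ.filter fun i => f (τ i) = v) => τ i)
  · intro i hi
    simp only [Finset.mem_filter, Finset.mem_univ, true_and] at hi ⊢
    exact hi
  · intro i _ j _ h; exact τ.injective h
  · intro j hj
    simp only [Finset.mem_filter, Finset.mem_univ, true_and] at hj
    exact ⟨τ.symm j, by simp [hj], by simp⟩

lemma sum_tuple3 (n a b c : ℕ) (h : a + b + c ≤ n) :
    ∑ i, tuple3 n a b c i = a + 2*b + 3*c := by
  rw [← Finset.sum_fiberwise_of_maps_to (t := Finset.range 4) (g := tuple3 n a b c)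
    (fun i _ => Finset.mem_range.2 (by have := tuple3_le n a b c i; omega)) (tuple3 n a b c)]
  have step : ∀ v ∈ Finset.range 4,
      (∑ i ∈ Finset.univ.filter (fun i => tuple3 n a b c i = v), tuple3 n a b c i)
        = v * fib n (tuple3 n a b c) v := by
    intro v _
    rw [Finset.sum_congr rfl (fun i hi => (Finset.mem_filter.1 hi).2), Finset.sum_const,
      smul_eq_mul, mul_comm, fib]
  rw [Finset.sum_congr rfl step]
  rw [show (4:ℕ) = 3+1 from rfl]
  rw [Finset.sum_range_succ, Finset.sum_range_succ, Finset.sum_range_succ,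
    Finset.sum_range_succ, Finset.sum_range_zero]
  rw [fib_tuple3_0 n a b c h, fib_tuple3_1 n a b c h, fib_tuple3_2 n a b c h,
    fib_tuple3_3 n a b c h]
  omega

-- cumulative count
lemma cum_eq_sum_fib (n : ℕ) (f : Fin n → ℕ) (v : ℕ) :
    (Finset.univ.filter fun i : Fin n => f i ≤ v).card
      = ∑ u ∈ Finset.range (v+1), fib n f u := by
  rw [Finset.card_eq_sum_card_fiberwise
    (f := f) (t := Finset.range (v+1))
    (fun i hi => Finset.mem_range.2 (by have := (Finset.mem_filter.1 hi).2; omega))]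
  refine Finset.sum_congr rfl fun u hu => ?_
  rw [Finset.mem_range] at hu
  rw [fib]
  congr 1
  ext i
  simp only [Finset.mem_filter, Finset.mem_univ, true_and]
  constructor
  · intro hh; exact hh.2
  · intro hh; exact ⟨by omega, hh⟩

lemma monotone_le_iff (n : ℕ) (f : Fin n → ℕ) (hf : ∀ i j : Fin n, i ≤ j → f i ≤ f j)
    (v : ℕ) (i : Fin n) :
    f i ≤ v ↔ (i:ℕ) < (Finset.univ.filter fun j : Fin n => f j ≤ v).card := by
  constructor
  · intro h
    have hsub : Finset.Iic i ⊆ Finset.univ.filter fun j : Fin n => f j ≤ v := by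
      intro j hj
      rw [Finset.mem_Iic] at hj
      exact Finset.mem_filter.2 ⟨Finset.mem_univ _, le_trans (hf j i hj) h⟩
    have := Finset.card_le_card hsub
    rw [Fin.card_Iic] at this
    omega
  · intro h
    by_contra hcon
    push_neg at hcon
    have hsub : (Finset.univ.filter fun j : Fin n => f j ≤ v) ⊆ Finset.Iio i := by
      intro j hj
      rw [Finset.mem_Iio]
      have hj2 := (Finset.mem_filter.1 hj).2
      by_contra hc2
      push_neg at hc2
      exact absurd hj2 (by have := hf i j hc2; omega)
    have := Finset.card_le_card hsub
    rw [Fin.card_Iio] at this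
    omega

lemma monotone_eq_of_fib (n : ℕ) (f g : Fin n → ℕ)
    (hf : ∀ i j : Fin n, i ≤ j → f i ≤ f j) (hg : ∀ i j : Fin n, i ≤ j → g i ≤ g j)
    (h : ∀ v, fib n f v = fib n g v) : f = g := by
  have hcum : ∀ v, (Finset.univ.filter fun j : Fin n => f j ≤ v).card
      = (Finset.univ.filter fun j : Fin n => g j ≤ v).card := by
    intro v
    rw [cum_eq_sum_fib, cum_eq_sum_fib]
    exact Finset.sum_congr rfl fun u _ => h u
  funext i
  by_contra hne
  rcases Nat.lt_or_ge (f i) (g i) with hlt | hge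
  · have h1 : f i ≤ f i := le_refl _
    rw [monotone_le_iff n f hf (f i) i, hcum (f i), ← monotone_le_iff n g hg (f i) i] at h1
    omega
  · have hlt : g i < f i := by omega
    have h1 : g i ≤ g i := le_refl _
    rw [monotone_le_iff n g hg (g i) i, ← hcum (g i), ← monotone_le_iff n f hf (g i) i] at h1
    omega

lemma exists_comp_perm_of_fib (n : ℕ) (f g : Fin n → ℕ)
    (h : ∀ v, fib n f v = fib n g v) : ∃ τ : Equiv.Perm (Fin n), f = g ∘ τ := by
  set s := Tuple.sort f with hs
  set t := Tuple.sort g with ht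
  have hfs : ∀ i j : Fin n, i ≤ j → (f ∘ s) i ≤ (f ∘ s) j :=
    fun i j hij => Tuple.monotone_sort f hij
  have hgt : ∀ i j : Fin n, i ≤ j → (g ∘ t) i ≤ (g ∘ t) j :=
    fun i j hij => Tuple.monotone_sort g hij
  have hfib : ∀ v, fib n (f ∘ s) v = fib n (g ∘ t) v := by
    intro v
    have h1 : fib n (f ∘ ⇑s) v = fib n f v := fib_comp_perm n f s v
    have h2 : fib n (g ∘ ⇑t) v = fib n g v := fib_comp_perm n g t v
    rw [show (f ∘ ⇑s) = fun i => f (s i) from rfl] at *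
    rw [show (g ∘ ⇑t) = fun i => g (t i) from rfl] at *
    rw [h1, h2]; exact h v
  have heq : f ∘ ⇑s = g ∘ ⇑t := monotone_eq_of_fib n _ _ hfs hgt hfib
  refine ⟨s.symm.trans t, funext fun i => ?_⟩
  have : f (s (s.symm i)) = g (t (s.symm i)) := congrFun heq (s.symm i)
  simpa using this



lemma tuple3_mem_Par (n a b c m : ℕ) (h : a + b + c ≤ n) (hm : a + 2*b + 3*c = m) :
    tuple3 n a b c ∈ Par n m := by
  rw [Par, Finset.mem_filter]
  refine ⟨Fintype.mem_piFinset.2 fun i => Finset.mem_range.2 ?_, fun i j hij => ?_, ?_⟩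
  · have hi := i.isLt
    unfold tuple3; split_ifs <;> omega
  · have hij' : (i:ℕ) ≤ (j:ℕ) := hij
    unfold tuple3; split_ifs <;> omega
  · rw [sum_tuple3 n a b c h]; exact hm

def rotFun (n c : ℕ) (hc : c ≤ n) : Fin n → Fin n := fun i =>
  if h2 : (i:ℕ) + c < n then ⟨(i:ℕ) + c, h2⟩
  else ⟨(i:ℕ) + c - n, by have := i.isLt; omega⟩

def rotInv (n c : ℕ) (hc : c ≤ n) : Fin n → Fin n := fun j =>
  if h2 : c ≤ (j:ℕ) then ⟨(j:ℕ) - c, by have := j.isLt; omega⟩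
  else ⟨(j:ℕ) + n - c, by have := j.isLt; omega⟩

lemma rotFun_val (n c : ℕ) (hc : c ≤ n) (i : Fin n) :
    (rotFun n c hc i : ℕ) = if (i:ℕ) + c < n then (i:ℕ) + c else (i:ℕ) + c - n := by
  unfold rotFun; split_ifs <;> rfl

lemma rotInv_val (n c : ℕ) (hc : c ≤ n) (j : Fin n) :
    (rotInv n c hc j : ℕ) = if c ≤ (j:ℕ) then (j:ℕ) - c else (j:ℕ) + n - c := by
  unfold rotInv; split_ifs <;> rfl

def rot (n c : ℕ) (hc : c ≤ n) : Equiv.Perm (Fin n) where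
  toFun := rotFun n c hc
  invFun := rotInv n c hc
  left_inv := by
    intro i
    have h1 := rotFun_val n c hc i
    have h2 := rotInv_val n c hc (rotFun n c hc i)
    have hi := i.isLt
    have hi2 := (rotFun n c hc i).isLt
    apply Fin.ext
    rw [h2]
    split_ifs at h1 ⊢ <;> omega
  right_inv := by
    intro j
    have h1 := rotInv_val n c hc j
    have h2 := rotFun_val n c hc (rotInv n c hc j)
    have hj := j.isLt
    have hj2 := (rotInv n c hc j).isLt
    apply Fin.ext
    rw [h2]
    split_ifs at h1 ⊢ <;> omega

lemma rot_apply (n c : ℕ) (hc : c ≤ n) (i : Fin n) :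
    ((rot n c hc i : Fin n) : ℕ) = if (i:ℕ) + c < n then (i:ℕ) + c else (i:ℕ) + c - n :=
  rotFun_val n c hc i

lemma rot_symm_apply (n c : ℕ) (hc : c ≤ n) (j : Fin n) :
    (((rot n c hc).symm j : Fin n) : ℕ) = if c ≤ (j:ℕ) then (j:ℕ) - c else (j:ℕ) + n - c :=
  rotInv_val n c hc j

lemma top_forced (n : ℕ) (μ β : Fin n → ℕ) (σ : Equiv.Perm (Fin n)) (t : ℕ)
    (hμ : ∀ j : Fin n, t ≤ (j:ℕ) → μ j = 3) (hβ : ∀ j, β j ≤ 3)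
    (E : ∀ i : Fin n, μ i + (i:ℕ) = β i + ((σ i : Fin n) : ℕ)) :
    ∀ j : Fin n, t ≤ (j:ℕ) → σ j = j ∧ β j = 3 := by
  have main : ∀ d : ℕ, ∀ j : Fin n, n - (j:ℕ) ≤ d → t ≤ (j:ℕ) → σ j = j ∧ β j = 3 := by
    intro d
    induction d using Nat.strong_induction_on with
    | _ d ih =>
      intro j hd ht
      have hj := j.isLt
      have hσle : ((σ j : Fin n) : ℕ) ≤ (j:ℕ) := by
        by_contra hgt
        push_neg at hgt
        have hv := (σ j).isLt
        have hres := (ih (n - ((σ j : Fin n) : ℕ)) (by omega) (σ j) (le_refl _) (by omega)).1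
        have hinj : σ j = j := σ.injective hres
        have := congrArg Fin.val hinj
        omega
      have hE := E j
      have hμj := hμ j ht
      have hβj := hβ j
      refine ⟨Fin.ext (by omega), by omega⟩
  exact fun j ht => main n j (by omega) ht

lemma bot_forced (n : ℕ) (μ β : Fin n → ℕ) (σ : Equiv.Perm (Fin n)) (s : ℕ)
    (hμ : ∀ j : Fin n, (j:ℕ) < s → μ j = 0)
    (E : ∀ i : Fin n, μ i + (i:ℕ) = β i + ((σ i : Fin n) : ℕ)) :
    ∀ j : Fin n, (j:ℕ) < s → σ j = j ∧ β j = 0 := by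
  have main : ∀ d : ℕ, ∀ j : Fin n, (j:ℕ) ≤ d → (j:ℕ) < s → σ j = j ∧ β j = 0 := by
    intro d
    induction d using Nat.strong_induction_on with
    | _ d ih =>
      intro j hd hs
      have hE := E j
      have hμj := hμ j hs
      have hσle : ((σ j : Fin n) : ℕ) ≤ (j:ℕ) := by omega
      have hσeq : ((σ j : Fin n) : ℕ) = (j:ℕ) := by
        by_contra hne
        have hlt : ((σ j : Fin n) : ℕ) < (j:ℕ) := by omega
        have hd2 : ((σ j : Fin n) : ℕ) < d := by omega
        have hres := (ih ((σ j : Fin n) : ℕ) hd2 (σ j) (le_refl _) (by omega)).1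
        have hinj : σ j = j := σ.injective hres
        have := congrArg Fin.val hinj
        omega
      refine ⟨Fin.ext hσeq, by omega⟩
  exact fun j hs => main (j:ℕ) j (le_refl _) hs

lemma card_shift (n c : ℕ) (hc : c ≤ n) (f g : Fin n → ℕ) (v : ℕ)
    (hrel : ∀ i : Fin n, ((i:ℕ) < n - c) → ∀ (hi : (i:ℕ) + c < n), f i = g ⟨(i:ℕ) + c, hi⟩) :
    (Finset.univ.filter fun i : Fin n => f i = v ∧ (i:ℕ) < n - c).card
      = (Finset.univ.filter fun j : Fin n => g j = v ∧ ¬ (j:ℕ) < c).card := by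
  refine Finset.card_bij
    (fun (i : Fin n) (hi : i ∈ Finset.univ.filter fun i : Fin n => f i = v ∧ (i:ℕ) < n - c) =>
      (⟨(i:ℕ) + c, by have := (Finset.mem_filter.1 hi).2.2; omega⟩ : Fin n)) ?_ ?_ ?_
  · intro i hi
    have hm := (Finset.mem_filter.1 hi).2
    simp only [Finset.mem_filter, Finset.mem_univ, true_and, Fin.val_mk]
    refine ⟨?_, by omega⟩
    rw [← hrel i hm.2 (by omega)]
    exact hm.1
  · intro i hi i2 hi2 heq
    have := congrArg Fin.val heq
    simp only [Fin.val_mk] at this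
    exact Fin.ext (by omega)
  · intro j hj
    have hm := (Finset.mem_filter.1 hj).2
    have hjlt := j.isLt
    refine ⟨⟨(j:ℕ) - c, by omega⟩, Finset.mem_filter.2 ⟨Finset.mem_univ _, ?_, by simp; omega⟩, ?_⟩
    · have he : g (⟨((⟨(j:ℕ) - c, by omega⟩ : Fin n) : ℕ) + c, by simp; omega⟩ : Fin n) = g j := by
        apply congrArg
        apply Fin.ext
        simp
        omega
      rw [hrel (⟨(j:ℕ) - c, by omega⟩ : Fin n) (by simp; omega) (by simp; omega), he]
      exact hm.1
    · apply Fin.ext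
      simp
      omega

lemma fibrel (n c : ℕ) (hc : c ≤ n) (f g : Fin n → ℕ) (w w' : ℕ)
    (hg : ∀ j : Fin n, (j:ℕ) < c → g j = w)
    (hf : ∀ i : Fin n, n - c ≤ (i:ℕ) → f i = w')
    (hrel : ∀ i : Fin n, ((i:ℕ) < n - c) → ∀ (hi : (i:ℕ) + c < n), f i = g ⟨(i:ℕ) + c, hi⟩) :
    ∀ v, fib n g v + (if v = w' then c else 0) = fib n f v + (if v = w then c else 0) := by
  intro v
  have splitg : fib n g v
      = (Finset.univ.filter fun j : Fin n => g j = v ∧ (j:ℕ) < c).card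
        + (Finset.univ.filter fun j : Fin n => g j = v ∧ ¬ (j:ℕ) < c).card := by
    rw [fib, ← Finset.filter_filter, ← Finset.filter_filter,
      Finset.card_filter_add_card_filter_not]
  have splitf : fib n f v
      = (Finset.univ.filter fun i : Fin n => f i = v ∧ (i:ℕ) < n - c).card
        + (Finset.univ.filter fun i : Fin n => f i = v ∧ ¬ (i:ℕ) < n - c).card := by
    rw [fib, ← Finset.filter_filter, ← Finset.filter_filter,
      Finset.card_filter_add_card_filter_not]
  have hA : (Finset.univ.filter fun j : Fin n => g j = v ∧ (j:ℕ) < c).card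
      = if v = w then c else 0 := by
    by_cases hv : v = w
    · rw [if_pos hv]
      have hcc := card_val_Ico n 0 c hc
      rw [Nat.sub_zero] at hcc
      have e2 : (Finset.univ.filter fun j : Fin n => g j = v ∧ (j:ℕ) < c)
          = Finset.univ.filter fun i : Fin n => 0 ≤ (i:ℕ) ∧ (i:ℕ) < c := by
        apply Finset.filter_congr
        intro j _
        constructor
        · intro hh; exact ⟨Nat.zero_le _, hh.2⟩
        · intro hh; exact ⟨by rw [hg j hh.2, hv], hh.2⟩
      rw [e2, hcc]
    · rw [if_neg hv, Finset.card_eq_zero]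
      apply Finset.filter_false_of_mem
      intro j _ hh
      exact hv (by rw [← hg j hh.2, hh.1])
  have hB' : (Finset.univ.filter fun i : Fin n => f i = v ∧ ¬ (i:ℕ) < n - c).card
      = if v = w' then c else 0 := by
    by_cases hv : v = w'
    · rw [if_pos hv]
      have hcc := card_val_Ico n (n-c) n (le_refl n)
      rw [show n - (n-c) = c from by omega] at hcc
      have e2 : (Finset.univ.filter fun i : Fin n => f i = v ∧ ¬ (i:ℕ) < n - c)
          = Finset.univ.filter fun i : Fin n => n - c ≤ (i:ℕ) ∧ (i:ℕ) < n := by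
        apply Finset.filter_congr
        intro j _
        constructor
        · intro hh; exact ⟨by omega, j.isLt⟩
        · intro hh; exact ⟨by rw [hf j (by omega), hv], by omega⟩
      rw [e2, hcc]
    · rw [if_neg hv, Finset.card_eq_zero]
      apply Finset.filter_false_of_mem
      intro j _ hh
      exact hv (by rw [← hf j (by omega), hh.1])
  have hBA := card_shift n c hc f g v hrel
  omega


lemma mu_top (n a b c : ℕ) (h : a + b + c ≤ n) :
    ∀ j : Fin n, n - c ≤ (j:ℕ) → tuple3 n a b c j = 3 := by
  intro j hj
  unfold tuple3
  have := j.isLt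
  split_ifs <;> omega

lemma mu_rel (n a b c : ℕ) (h : a + b + c ≤ n) :
    ∀ i : Fin n, ((i:ℕ) < n - c) → ∀ (hi : (i:ℕ) + c < n),
      tuple3 n a b c i = tuple3 n a b 0 ⟨(i:ℕ) + c, hi⟩ := by
  intro i hlt hi
  unfold tuple3
  simp only [Fin.val_mk]
  split_ifs <;> omega

lemma mu'_bot (n a b : ℕ) :
    ∀ j : Fin n, (j:ℕ) < n - a - b → tuple3 n a b 0 j = 0 := by
  intro j hj
  unfold tuple3
  split_ifs <;> omega

lemma forward_dir (n k l a b c : ℕ) (hn : k + 3*l ≤ n) (hcl : c ≤ l)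
    (hsum : a + 2*b + 3*c = k + 3*l) (hcn : c ≤ n) (σ : Equiv.Perm (Fin n))
    (h : ∃ τ : Equiv.Perm (Fin n), ∀ i,
      tuple3 n a b c i + (i:ℕ) = tuple3 n k 0 l (τ i) + ((σ i : Fin n) : ℕ)) :
    ∃ τ' : Equiv.Perm (Fin n), ∀ j,
      tuple3 n a b 0 j + (j:ℕ) = tuple3 n k 0 (l-c) (τ' j)
        + (((rot n c hcn * σ * (rot n c hcn)⁻¹) j : Fin n) : ℕ) := by
  obtain ⟨τ, E⟩ := h
  have habc : a + b + c ≤ n := by omega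
  set ρ := rot n c hcn with hρ
  set β : Fin n → ℕ := fun i => tuple3 n k 0 l (τ i) with hβdef
  have hβle : ∀ i, β i ≤ 3 := fun i => tuple3_le n k 0 l (τ i)
  have htop := top_forced n (tuple3 n a b c) β σ (n-c) (mu_top n a b c habc) hβle E
  set β' : Fin n → ℕ := fun j =>
    if h2 : (j:ℕ) < c then 0 else β ⟨(j:ℕ) - c, by have := j.isLt; omega⟩ with hβ'def
  -- the conjugated permutation
  have hσ' : ∀ j : Fin n, (ρ * σ * ρ⁻¹) j = ρ (σ (ρ.symm j)) := by
    intro j; rfl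
  -- facts about σ on the lower part
  have hσlow : ∀ i : Fin n, (i:ℕ) < n - c → ((σ i : Fin n) : ℕ) < n - c := by
    intro i hi
    by_contra hge
    push_neg at hge
    have h1 := (htop (σ i) hge).1
    have h2 : σ i = i := σ.injective h1
    have := congrArg Fin.val h2
    omega
  -- the equation for the conjugated data
  have hEq' : ∀ j : Fin n, tuple3 n a b 0 j + (j:ℕ) = β' j + (((ρ * σ * ρ⁻¹) j : Fin n) : ℕ) := by
    intro j
    have hj := j.isLt
    rw [hσ']
    by_cases hjc : (j:ℕ) < c
    · -- bottom part, coming from the top block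
      have hval : ((ρ.symm j : Fin n) : ℕ) = (j:ℕ) + n - c := by
        rw [rot_symm_apply]
        rw [if_neg (by omega)]
      have htopj := htop (ρ.symm j) (by omega)
      rw [htopj.1]
      have hval2 : ((ρ (ρ.symm j) : Fin n) : ℕ) = (j:ℕ) := by
        rw [rot_apply, hval]
        split_ifs <;> omega
      rw [hval2]
      have hμ'0 : tuple3 n a b 0 j = 0 := mu'_bot n a b j (by omega)
      have hβ'0 : β' j = 0 := by simp only [hβ'def]; rw [dif_pos hjc]
      omega
    · -- middle part
      have hval : ((ρ.symm j : Fin n) : ℕ) = (j:ℕ) - c := by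
        rw [rot_symm_apply, if_pos (by omega)]
      have hi0lt : ((ρ.symm j : Fin n) : ℕ) < n - c := by omega
      have hσlt := hσlow (ρ.symm j) hi0lt
      have hval2 : ((ρ (σ (ρ.symm j)) : Fin n) : ℕ) = ((σ (ρ.symm j) : Fin n) : ℕ) + c := by
        rw [rot_apply, if_pos (by omega)]
      have hE : tuple3 n a b c (ρ.symm j) + ((ρ.symm j : Fin n) : ℕ)
          = β (ρ.symm j) + ((σ (ρ.symm j) : Fin n) : ℕ) := E (ρ.symm j)
      have hμrel := mu_rel n a b c habc (ρ.symm j) hi0lt (by omega)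
      have hjeq : (⟨((ρ.symm j : Fin n) : ℕ) + c, by omega⟩ : Fin n) = j := by
        apply Fin.ext; simp only [Fin.val_mk]; omega
      rw [hjeq] at hμrel
      have hβ'j : β' j = β (ρ.symm j) := by
        simp only [hβ'def]
        rw [dif_neg hjc]
        all_goals exact congrArg β (by apply Fin.ext; simp only [Fin.val_mk]; omega)
      rw [hval2, hβ'j, ← hμrel]
      omega
  -- fiber counts
  have hfibβ : ∀ v, fib n β v = fib n (tuple3 n k 0 l) v := by
    intro v
    rw [hβdef]
    exact fib_comp_perm n (tuple3 n k 0 l) τ v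
  have hrel := fibrel n c hcn β β' 0 3
    (fun j hj => by simp only [hβ'def]; rw [dif_pos hj])
    (fun i hi => (htop i hi).2)
    (fun i hi h2 => by
      simp only [hβ'def]
      rw [dif_neg (by omega)]
      all_goals exact congrArg β (by apply Fin.ext; simp only [Fin.val_mk]; omega))
  have hfib' : ∀ v, fib n β' v = fib n (tuple3 n k 0 (l-c)) v := by
    intro v
    have h1 := hrel v
    rw [hfibβ v] at h1
    match v with
    | 0 =>
      have e1 := fib_tuple3_0 n k 0 l (by omega)
      have e2 := fib_tuple3_0 n k 0 (l-c) (by omega)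
      norm_num at h1
      omega
    | 1 =>
      have e1 := fib_tuple3_1 n k 0 l (by omega)
      have e2 := fib_tuple3_1 n k 0 (l-c) (by omega)
      norm_num at h1
      omega
    | 2 =>
      have e1 := fib_tuple3_2 n k 0 l (by omega)
      have e2 := fib_tuple3_2 n k 0 (l-c) (by omega)
      norm_num at h1
      omega
    | 3 =>
      have e1 := fib_tuple3_3 n k 0 l (by omega)
      have e2 := fib_tuple3_3 n k 0 (l-c) (by omega)
      norm_num at h1
      omega
    | (v+4) =>
      have e1 := fib_tuple3_big n k 0 l (v+4) (by omega)
      have e2 := fib_tuple3_big n k 0 (l-c) (v+4) (by omega)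
      have hn1 : ¬ (v+4 = 3) := by omega
      have hn2 : ¬ (v+4 = 0) := by omega
      rw [if_neg hn1, if_neg hn2] at h1
      omega
  obtain ⟨τ', hτ'⟩ := exists_comp_perm_of_fib n β' (tuple3 n k 0 (l-c)) hfib'
  refine ⟨τ', fun j => ?_⟩
  have := hEq' j
  rw [show β' j = tuple3 n k 0 (l-c) (τ' j) from congrFun hτ' j] at this
  exact this

lemma backward_dir (n k l a b c : ℕ) (hn : k + 3*l ≤ n) (hcl : c ≤ l)
    (hsum : a + 2*b + 3*c = k + 3*l) (hcn : c ≤ n) (σ : Equiv.Perm (Fin n))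
    (h : ∃ τ' : Equiv.Perm (Fin n), ∀ j,
      tuple3 n a b 0 j + (j:ℕ) = tuple3 n k 0 (l-c) (τ' j)
        + (((rot n c hcn * σ * (rot n c hcn)⁻¹) j : Fin n) : ℕ)) :
    ∃ τ : Equiv.Perm (Fin n), ∀ i,
      tuple3 n a b c i + (i:ℕ) = tuple3 n k 0 l (τ i) + ((σ i : Fin n) : ℕ) := by
  obtain ⟨τ', E'⟩ := h
  have habc : a + b + c ≤ n := by omega
  set ρ := rot n c hcn with hρ
  set σ' : Equiv.Perm (Fin n) := ρ * σ * ρ⁻¹ with hσ'def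
  set βh : Fin n → ℕ := fun j => tuple3 n k 0 (l-c) (τ' j) with hβhdef
  have hbot := bot_forced n (tuple3 n a b 0) βh σ' (n - a - b) (mu'_bot n a b) E'
  have hkey : ∀ i : Fin n, σ' (ρ i) = ρ (σ i) := by
    intro i
    show (ρ * σ * ρ⁻¹) (ρ i) = ρ (σ i)
    simp [Equiv.Perm.mul_apply]
  set β : Fin n → ℕ := fun i =>
    if h2 : (i:ℕ) < n - c then βh ⟨(i:ℕ) + c, by have := i.isLt; omega⟩ else 3 with hβdef
  -- equation
  have hσtop : ∀ i : Fin n, n - c ≤ (i:ℕ) → σ i = i := by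
    intro i hi
    have hρi : ((ρ i : Fin n) : ℕ) = (i:ℕ) + c - n := by
      rw [rot_apply, if_neg (by have := i.isLt; omega)]
    have hρilt : ((ρ i : Fin n) : ℕ) < c := by have := i.isLt; omega
    have hfix := (hbot (ρ i) (by omega)).1
    have : σ' (ρ i) = ρ i := hfix
    rw [hkey i] at this
    exact ρ.injective this
  have hσlow : ∀ i : Fin n, (i:ℕ) < n - c → ((σ i : Fin n) : ℕ) < n - c := by
    intro i hi
    by_contra hge
    push_neg at hge
    have h1 := hσtop (σ i) hge
    have h2 : σ i = i := σ.injective h1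
    have := congrArg Fin.val h2
    omega
  have hE : ∀ i : Fin n, tuple3 n a b c i + (i:ℕ) = β i + ((σ i : Fin n) : ℕ) := by
    intro i
    have hi := i.isLt
    by_cases hlt : (i:ℕ) < n - c
    · have hρi : ((ρ i : Fin n) : ℕ) = (i:ℕ) + c := by
        rw [rot_apply, if_pos (by omega)]
      have hE' : tuple3 n a b 0 (ρ i) + ((ρ i : Fin n) : ℕ)
          = βh (ρ i) + ((σ' (ρ i) : Fin n) : ℕ) := E' (ρ i)
      have hσlt := hσlow i hlt
      have hσ'val : ((σ' (ρ i) : Fin n) : ℕ) = ((σ i : Fin n) : ℕ) + c := by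
        rw [hkey i, rot_apply, if_pos (by omega)]
      have hμrel := mu_rel n a b c habc i hlt (by omega)
      have hieq : (⟨(i:ℕ) + c, by omega⟩ : Fin n) = ρ i := by
        apply Fin.ext; simp only [Fin.val_mk]; omega
      rw [hieq] at hμrel
      have hβi : β i = βh (ρ i) := by
        simp only [hβdef]
        rw [dif_pos hlt]
        all_goals exact congrArg βh (by apply Fin.ext; simp only [Fin.val_mk]; omega)
      rw [hβi, hμrel]
      rw [hσ'val] at hE'
      omega
    · have hμ3 : tuple3 n a b c i = 3 := mu_top n a b c habc i (by omega)
      have hβ3 : β i = 3 := by simp only [hβdef]; rw [dif_neg hlt]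
      rw [hσtop i (by omega), hμ3, hβ3]
  -- fibers
  have hfibβh : ∀ v, fib n βh v = fib n (tuple3 n k 0 (l-c)) v := by
    intro v
    rw [hβhdef]
    exact fib_comp_perm n (tuple3 n k 0 (l-c)) τ' v
  have hrel := fibrel n c hcn β βh 0 3
    (fun j hj => (hbot j (by omega)).2)
    (fun i hi => by simp only [hβdef]; rw [dif_neg (show ¬ (i:ℕ) < n - c by omega)])
    (fun i hi h2 => by
      simp only [hβdef]
      rw [dif_pos hi])
  have hfib : ∀ v, fib n β v = fib n (tuple3 n k 0 l) v := by
    intro v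
    have h1 := hrel v
    rw [hfibβh v] at h1
    match v with
    | 0 =>
      have e1 := fib_tuple3_0 n k 0 l (by omega)
      have e2 := fib_tuple3_0 n k 0 (l-c) (by omega)
      norm_num at h1
      omega
    | 1 =>
      have e1 := fib_tuple3_1 n k 0 l (by omega)
      have e2 := fib_tuple3_1 n k 0 (l-c) (by omega)
      norm_num at h1
      omega
    | 2 =>
      have e1 := fib_tuple3_2 n k 0 l (by omega)
      have e2 := fib_tuple3_2 n k 0 (l-c) (by omega)
      norm_num at h1
      omega
    | 3 =>
      have e1 := fib_tuple3_3 n k 0 l (by omega)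
      have e2 := fib_tuple3_3 n k 0 (l-c) (by omega)
      norm_num at h1
      omega
    | (v+4) =>
      have e1 := fib_tuple3_big n k 0 l (v+4) (by omega)
      have e2 := fib_tuple3_big n k 0 (l-c) (v+4) (by omega)
      have hn1 : ¬ (v+4 = 3) := by omega
      have hn2 : ¬ (v+4 = 0) := by omega
      rw [if_neg hn1, if_neg hn2] at h1
      omega
  obtain ⟨τ, hτ⟩ := exists_comp_perm_of_fib n β (tuple3 n k 0 l) hfib
  refine ⟨τ, fun i => ?_⟩
  have := hE i
  rw [show β i = tuple3 n k 0 l (τ i) from congrFun hτ i] at this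
  exact this


lemma eq_tuple3_of_bounded (n m : ℕ) (μ : Fin n → ℕ) (hμ : μ ∈ Par n m)
    (hb : ∀ i, μ i ≤ 3) :
    μ = tuple3 n (fib n μ 1) (fib n μ 2) (fib n μ 3)
      ∧ fib n μ 0 + fib n μ 1 + fib n μ 2 + fib n μ 3 = n := by
  have mono := par_monotone hμ
  have hn4 : fib n μ 0 + fib n μ 1 + fib n μ 2 + fib n μ 3 = n := by
    have hcard := Finset.card_eq_sum_card_fiberwise
      (s := Finset.univ) (t := Finset.range 4) (f := μ)
      (fun i _ => Finset.mem_range.2 (by have := hb i; omega))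
    rw [Finset.card_univ, Fintype.card_fin] at hcard
    rw [show (4:ℕ) = 3+1 from rfl, Finset.sum_range_succ, Finset.sum_range_succ,
      Finset.sum_range_succ, Finset.sum_range_succ, Finset.sum_range_zero] at hcard
    rw [fib, fib, fib, fib]
    omega
  refine ⟨?_, hn4⟩
  have e0 : (Finset.univ.filter fun j : Fin n => μ j ≤ 0).card = fib n μ 0 := by
    rw [cum_eq_sum_fib, Finset.sum_range_one]
  have e1 : (Finset.univ.filter fun j : Fin n => μ j ≤ 1).card = fib n μ 0 + fib n μ 1 := by
    rw [cum_eq_sum_fib, show (1:ℕ)+1 = 0+1+1 from rfl, Finset.sum_range_succ,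
      Finset.sum_range_succ, Finset.sum_range_zero]
    omega
  have e2 : (Finset.univ.filter fun j : Fin n => μ j ≤ 2).card
      = fib n μ 0 + fib n μ 1 + fib n μ 2 := by
    rw [cum_eq_sum_fib, show (2:ℕ)+1 = 0+1+1+1 from rfl, Finset.sum_range_succ,
      Finset.sum_range_succ, Finset.sum_range_succ, Finset.sum_range_zero]
    omega
  funext i
  have hi0 := monotone_le_iff n μ mono 0 i
  have hi1 := monotone_le_iff n μ mono 1 i
  have hi2 := monotone_le_iff n μ mono 2 i
  rw [e0] at hi0
  rw [e1] at hi1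
  rw [e2] at hi2
  have hbi := hb i
  unfold tuple3
  split_ifs with h1 h2 h3
  · have hx : μ i ≤ 0 := hi0.2 (by omega)
    omega
  · have hy : ¬ μ i ≤ 0 := fun hx => absurd (hi0.1 hx) (by omega)
    have hx : μ i ≤ 1 := hi1.2 (by omega)
    omega
  · have hy : ¬ μ i ≤ 1 := fun hx => absurd (hi1.1 hx) (by omega)
    have hx : μ i ≤ 2 := hi2.2 (by omega)
    omega
  · have hy : ¬ μ i ≤ 2 := fun hx => absurd (hi2.1 hx) (by omega)
    omega

/-- `K⁻¹_{(1^k,3^l),μ} = 0` unless `μ = (1^a,2^b,3^c)` with `c ≤ l`, in which case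
`K⁻¹_{(1^k,3^l),(1^a,2^b,3^c)} = K⁻¹_{(1^k,3^{l-c}),(1^a,2^b)}`. -/
theorem stmt16 (n k l : ℕ) (hn : k + 3 * l ≤ n)
    (K : (Fin n → ℕ) → (Fin n → ℕ) → ℤ) (hK : IsInvKostka n K) :
    (∀ μ ∈ Par n (k + 3 * l),
        (¬ ∃ a b c : ℕ, c ≤ l ∧ μ = tuple3 n a b c) → K (tuple3 n k 0 l) μ = 0) ∧
    ∀ a b c : ℕ, c ≤ l → a + 2 * b + 3 * c = k + 3 * l →
      K (tuple3 n k 0 l) (tuple3 n a b c)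
        = K (tuple3 n k 0 (l - c)) (tuple3 n a b 0) := by
  have hLamPar : tuple3 n k 0 l ∈ Par n (k + 3*l) :=
    tuple3_mem_Par n k 0 l _ (by omega) (by omega)
  constructor
  · intro μ hμPar hnex
    rw [K_eq_coeff n K hK (k+3*l) _ μ hLamPar hμPar]
    apply Finset.sum_eq_zero
    intro σ _
    rw [if_neg, mul_zero]
    rintro ⟨τ, hτ⟩
    by_cases hbig : ∀ i, μ i ≤ 3
    · -- all parts ≤ 3 : count the 3's
      obtain ⟨hμeq, hn4⟩ := eq_tuple3_of_bounded n (k+3*l) μ hμPar hbig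
      set a := fib n μ 1 with ha
      set b := fib n μ 2 with hbb
      set c := fib n μ 3 with hc
      have habc : a + b + c ≤ n := by omega
      have hcgt : ¬ c ≤ l := fun hcle => hnex ⟨a, b, c, hcle, hμeq⟩
      have hβle : ∀ i, tuple3 n k 0 l (τ i) ≤ 3 := fun i => tuple3_le n k 0 l (τ i)
      have htop := top_forced n μ (fun i => tuple3 n k 0 l (τ i)) σ (n-c)
        (fun j hj => by rw [hμeq]; exact mu_top n a b c habc j hj) hβle hτ
      have hsub : (Finset.univ.filter fun i : Fin n => n - c ≤ (i:ℕ) ∧ (i:ℕ) < n)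
          ⊆ (Finset.univ.filter fun i : Fin n => tuple3 n k 0 l (τ i) = 3) := by
        intro j hjmem
        have hj := (Finset.mem_filter.1 hjmem).2
        exact Finset.mem_filter.2 ⟨Finset.mem_univ _, (htop j hj.1).2⟩
      have hcard1 := card_val_Ico n (n-c) n (le_refl n)
      have hcard2 : (Finset.univ.filter fun i : Fin n => tuple3 n k 0 l (τ i) = 3).card
          = l := by
        have h1 : fib n (fun i => tuple3 n k 0 l (τ i)) 3 = fib n (tuple3 n k 0 l) 3 :=
          fib_comp_perm n (tuple3 n k 0 l) τ 3
        have h2 := fib_tuple3_3 n k 0 l (by omega)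
        rw [show (Finset.univ.filter fun i : Fin n => tuple3 n k 0 l (τ i) = 3).card
          = fib n (fun i => tuple3 n k 0 l (τ i)) 3 from rfl, h1, h2]
      have hmain := Finset.card_le_card hsub
      rw [hcard1, hcard2] at hmain
      omega
    · -- some part ≥ 4 : impossible
      push_neg at hbig
      obtain ⟨i0, hi0⟩ := hbig
      have hn0 : 0 < n := lt_of_le_of_lt (Nat.zero_le _) i0.isLt
      set last : Fin n := ⟨n-1, by omega⟩ with hlast
      have hle : μ i0 ≤ μ last := par_monotone hμPar i0 last
        (by rw [Fin.le_def]; simp only [hlast, Fin.val_mk]; have := i0.isLt; omega)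
      have hE := hτ last
      have h1 := (σ last).isLt
      have h2 := tuple3_le n k 0 l (τ last)
      have h3 : (last : ℕ) = n-1 := rfl
      omega
  · intro a b c hcl hsum
    have hcn : c ≤ n := by omega
    have habc : a + b + c ≤ n := by omega
    have hμPar : tuple3 n a b c ∈ Par n (k+3*l) :=
      tuple3_mem_Par n a b c _ habc hsum
    have hLamPar' : tuple3 n k 0 (l-c) ∈ Par n (a+2*b) :=
      tuple3_mem_Par n k 0 (l-c) _ (by omega) (by omega)
    have hμ'Par : tuple3 n a b 0 ∈ Par n (a+2*b) :=
      tuple3_mem_Par n a b 0 _ (by omega) (by omega)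
    rw [K_eq_coeff n K hK (k+3*l) _ _ hLamPar hμPar,
        K_eq_coeff n K hK (a+2*b) _ _ hLamPar' hμ'Par]
    set ρ := rot n c hcn with hρ
    refine Finset.sum_equiv ((Equiv.mulLeft ρ).trans (Equiv.mulRight ρ⁻¹))
      (fun σ => by simp) (fun σ _ => ?_)
    have he : ((Equiv.mulLeft ρ).trans (Equiv.mulRight ρ⁻¹)) σ = ρ * σ * ρ⁻¹ := rfl
    rw [he]
    have hsign : ((Equiv.Perm.sign (ρ * σ * ρ⁻¹) : ℤˣ) : ℤ)
        = ((Equiv.Perm.sign σ : ℤˣ) : ℤ) := by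
      rw [Equiv.Perm.sign_mul, Equiv.Perm.sign_mul, Equiv.Perm.sign_inv]
      rw [mul_comm (Equiv.Perm.sign ρ) (Equiv.Perm.sign σ), mul_assoc]
      simp
    rw [hsign]
    by_cases hQ : ∃ τ : Equiv.Perm (Fin n), ∀ i,
        tuple3 n a b c i + (i:ℕ) = tuple3 n k 0 l (τ i) + ((σ i : Fin n) : ℕ)
    · rw [if_pos hQ, if_pos (forward_dir n k l a b c hn hcl hsum hcn σ hQ)]
    · rw [if_neg hQ, if_neg (fun hQ' => hQ (backward_dir n k l a b c hn hcl hsum hcn σ hQ'))]
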